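/- Let f be convex and differentiable on [a,b] with f'(a) ≠ f'(b), and let T be the triangle with vertices (a,f(a)), (b,f(b)), and the tangent-intersection point (c, h) with h = f(a)+f'(a)(c-a). Then every point of T lies within vertical distance (b-a)·|f'(b)-f'(a)|/4 of the graph of f; specifically, for every (x,y) ∈ T, |y - f(x)| ≤ s(x) - t(x) where s is the secant and t the tangent envelope. -/

import Mathlib

open Set

private lemma aff_convexOn (A B C : ℝ) :
    ConvexOn ℝ (Set.univ : Set (ℝ × ℝ)) (fun p => A * p.1 + B * p.2 + C) := by
  refine ⟨convex_univ, fun x _ y _ u v hu hv huv => le_of_eq ?_⟩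
  simp only [Prod.smul_fst, Prod.smul_snd, Prod.fst_add, Prod.snd_add, smul_eq_mul]
  linear_combination (-C) * huv

private lemma min_bound {A B x a b : ℝ} (hA : 0 ≤ A) (hB : 0 ≤ B) (hax : a ≤ x) (hxb : x ≤ b)
    (h : A * (x - a) ≤ B * (b - x)) : A * (x - a) ≤ (b - a) * (A + B) / 4 := by
  have hu0 : 0 ≤ A * (x - a) := mul_nonneg hA (by linarith)
  have hv0 : 0 ≤ B * (b - x) := mul_nonneg hB (by linarith)
  have hR : 0 ≤ (b - a) * (A + B) / 4 :=
    div_nonneg (mul_nonneg (by linarith) (by linarith)) (by norm_num)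
  have h1 : (A * (x - a)) ^ 2 ≤ (A * (x - a)) * (B * (b - x)) := by nlinarith
  have hP : A * B ≤ (A + B) ^ 2 / 4 := by nlinarith [sq_nonneg (A - B)]
  have hQ : (x - a) * (b - x) ≤ (b - a) ^ 2 / 4 := by nlinarith [sq_nonneg (a + b - 2 * x)]
  have h2 : (A * (x - a)) * (B * (b - x)) ≤ ((A + B) ^ 2 / 4) * ((b - a) ^ 2 / 4) := by
    have e : (A * (x - a)) * (B * (b - x)) = (A * B) * ((x - a) * (b - x)) := by ring
    rw [e]
    exact mul_le_mul hP hQ (mul_nonneg (by linarith) (by linarith)) (by positivity)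
  nlinarith [sq_nonneg (A * (x - a) - (b - a) * (A + B) / 4),
    sq_nonneg (A * (x - a) + (b - a) * (A + B) / 4)]

theorem triangle_points_close_to_graph
    (f : ℝ → ℝ) (a b fa' fb' : ℝ) (hab : a < b)
    (hconv : ConvexOn ℝ (Set.Icc a b) f)
    (hdiff : DifferentiableOn ℝ f (Set.Icc a b))
    (hfa : HasDerivAt f fa' a) (hfb : HasDerivAt f fb' b)
    (hne : fa' ≠ fb') :
    let c := (f a - f b + fb' * b - fa' * a) / (fb' - fa')
    let s : ℝ → ℝ := fun x => f a + ((f b - f a) / (b - a)) * (x - a)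
    let t : ℝ → ℝ := fun x => max (f a + fa' * (x - a)) (f b + fb' * (x - b))
    let T := convexHull ℝ ({(a, f a), (b, f b), (c, f a + fa' * (c - a))} : Set (ℝ × ℝ))
    ∀ p ∈ T, |p.2 - f p.1| ≤ s p.1 - t p.1 ∧
      |p.2 - f p.1| ≤ (b - a) * |fb' - fa'| / 4 := by
  intro c s t T p hp
  have hba : (0:ℝ) < b - a := sub_pos.mpr hab
  set m : ℝ := (f b - f a) / (b - a) with hm
  have hfbval : f b = f a + m * (b - a) := by rw [hm]; field_simp; ring
  have ha : a ∈ Icc a b := left_mem_Icc.mpr hab.le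
  have hb : b ∈ Icc a b := right_mem_Icc.mpr hab.le
  -- tangent lines lie below f on [a,b]
  have hta : ∀ x ∈ Icc a b, f a + fa' * (x - a) ≤ f x := by
    intro x hx
    rcases eq_or_lt_of_le hx.1 with h | h
    · rw [← h]; simp
    · have h1 := hconv.le_slope_of_hasDerivAt ha hx h hfa
      rw [slope_def_field] at h1
      have h2 := (le_div_iff₀ (sub_pos.mpr h)).mp h1
      linarith
  have htb : ∀ x ∈ Icc a b, f b + fb' * (x - b) ≤ f x := by
    intro x hx
    rcases eq_or_lt_of_le hx.2 with h | h
    · rw [h]; simp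
    · have h1 := hconv.slope_le_of_hasDerivAt hx hb h hfb
      rw [slope_def_field] at h1
      have h2 := (div_le_iff₀ (sub_pos.mpr h)).mp h1
      linarith
  -- secant line lies above f on [a,b]
  have hsec : ∀ x ∈ Icc a b, f x ≤ f a + m * (x - a) := by
    intro x hx
    have hu : (0:ℝ) ≤ (b - x) / (b - a) := div_nonneg (by linarith [hx.2]) hba.le
    have hv : (0:ℝ) ≤ (x - a) / (b - a) := div_nonneg (by linarith [hx.1]) hba.le
    have huv : (b - x) / (b - a) + (x - a) / (b - a) = 1 := by field_simp; ring
    have hxc : ((b - x) / (b - a)) • a + ((x - a) / (b - a)) • b = x := by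
      simp only [smul_eq_mul]; field_simp; ring
    have h2 := hconv.2 ha hb hu hv huv
    rw [hxc, smul_eq_mul, smul_eq_mul] at h2
    have e : ((b - x) / (b - a)) * f a + ((x - a) / (b - a)) * f b
        = f a + m * (x - a) := by rw [hm]; field_simp; ring
    linarith [e ▸ h2]
  have hmab : fa' ≤ m := by
    rw [hm, le_div_iff₀ hba]; linarith [hta b hb]
  have hmbb : m ≤ fb' := by
    rw [hm, div_le_iff₀ hba]; linarith [htb a ha]
  have hd : fa' < fb' := lt_of_le_of_ne (hmab.trans hmbb) hne
  have hdpos : (0:ℝ) < fb' - fa' := sub_pos.mpr hd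
  have hcval : c = (f a - f b + fb' * b - fa' * a) / (fb' - fa') := rfl
  have hc1 : a ≤ c := by
    rw [hcval, le_div_iff₀ hdpos]; nlinarith [htb a ha]
  have hc2 : c ≤ b := by
    rw [hcval, div_le_iff₀ hdpos]; nlinarith [hta b hb]
  have hceq : f a + fa' * (c - a) = f b + fb' * (c - b) := by
    rw [hcval]; field_simp; ring
  have hcIcc : c ∈ Icc a b := ⟨hc1, hc2⟩
  have hsval : ∀ x, s x = f a + m * (x - a) := fun x => by rw [hm]
  have htval : ∀ x, t x = max (f a + fa' * (x - a)) (f b + fb' * (x - b)) := fun _ => rfl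
  have hp' : p ∈ convexHull ℝ
      ({(a, f a), (b, f b), (c, f a + fa' * (c - a))} : Set (ℝ × ℝ)) := hp
  -- p.1 ∈ [a,b]
  have hxb : p.1 ≤ b := by
    obtain ⟨q, hq, hle⟩ := (aff_convexOn 1 0 0).exists_ge_of_mem_convexHull
      (Set.subset_univ _) hp'
    simp only [Set.mem_insert_iff, Set.mem_singleton_iff] at hq
    rcases hq with rfl | rfl | rfl <;> simp at hle <;> linarith
  have hxa : a ≤ p.1 := by
    obtain ⟨q, hq, hle⟩ := (aff_convexOn (-1) 0 0).exists_ge_of_mem_convexHull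
      (Set.subset_univ _) hp'
    simp only [Set.mem_insert_iff, Set.mem_singleton_iff] at hq
    rcases hq with rfl | rfl | rfl <;> simp at hle <;> linarith
  have hxIcc : p.1 ∈ Icc a b := ⟨hxa, hxb⟩
  -- p.2 is below the secant
  have hys : p.2 ≤ f a + m * (p.1 - a) := by
    obtain ⟨q, hq, hle⟩ := (aff_convexOn (-m) 1 (m * a - f a)).exists_ge_of_mem_convexHull
      (Set.subset_univ _) hp'
    simp only [Set.mem_insert_iff, Set.mem_singleton_iff] at hq
    rcases hq with rfl | rfl | rfl <;> simp only at hle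
    · nlinarith
    · nlinarith
    · nlinarith [mul_nonneg (sub_nonneg.mpr hmab) (sub_nonneg.mpr hc1)]
  -- p.2 is above the tangent envelope
  have hty : t p.1 ≤ p.2 := by
    obtain ⟨q, hq, hle⟩ :=
      (((aff_convexOn fa' (-1) (f a - fa' * a)).sup
        (aff_convexOn fb' (-1) (f b - fb' * b)))).exists_ge_of_mem_convexHull
      (Set.subset_univ _) hp'
    have key : ∀ r : ℝ × ℝ,
        ((fun p : ℝ × ℝ => fa' * p.1 + (-1) * p.2 + (f a - fa' * a)) ⊔
         (fun p : ℝ × ℝ => fb' * p.1 + (-1) * p.2 + (f b - fb' * b))) r = t r.1 - r.2 := by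
      intro r
      simp only [Pi.sup_apply, htval, ← max_sub_sub_right]
      congr 1 <;> ring
    rw [key p] at hle
    simp only [Set.mem_insert_iff, Set.mem_singleton_iff] at hq
    rcases hq with rfl | rfl | rfl <;> rw [key] at hle <;> simp only [htval] at hle
    · have e1 : f a + fa' * (a - a) = f a := by ring
      have e2 := htb a ha
      rw [e1] at hle
      have : max (f a) (f b + fb' * (a - b)) = f a := max_eq_left (by linarith)
      rw [this] at hle; linarith
    · have e2 := hta b hb
      have : max (f a + fa' * (b - a)) (f b + fb' * (b - b)) = f b + fb' * (b - b) :=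
        max_eq_right (by nlinarith)
      rw [this] at hle; linarith
    · have : max (f a + fa' * (c - a)) (f b + fb' * (c - b)) = f a + fa' * (c - a) :=
        max_eq_left (le_of_eq hceq.symm)
      rw [this] at hle; linarith
  -- f is between t and s at p.1
  have htf : t p.1 ≤ f p.1 := by
    rw [htval]; exact max_le (hta p.1 hxIcc) (htb p.1 hxIcc)
  have hfs : f p.1 ≤ f a + m * (p.1 - a) := hsec p.1 hxIcc
  have main : |p.2 - f p.1| ≤ s p.1 - t p.1 := by
    rw [abs_le, hsval]
    constructor <;> linarith
  refine ⟨main, main.trans ?_⟩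
  rw [abs_of_pos hdpos, hsval, htval]
  rcases le_total (f a + fa' * (p.1 - a)) (f b + fb' * (p.1 - b)) with h | h
  · rw [max_eq_right h]
    have hkey := min_bound (sub_nonneg.mpr hmbb) (sub_nonneg.mpr hmab)
      (by linarith : -b ≤ -p.1) (by linarith : -p.1 ≤ -a)
      (by linarith : (fb' - m) * (-p.1 - -b) ≤ (m - fa') * (-a - -p.1))
    linarith [hkey]
  · rw [max_eq_left h]
    have hkey := min_bound (sub_nonneg.mpr hmab) (sub_nonneg.mpr hmbb) hxa hxb
      (by linarith : (m - fa') * (p.1 - a) ≤ (fb' - m) * (b - p.1))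
    linarith [hkey]
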